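/- For every integer n ≥ 2 and every real x with 0 < x < 1, one has δ_n² − k_n(x)·k_n(1/x) > 0. (Consequently a relative equilibrium of a central mass surrounded by two homothetic regular n-gons is never really perverse: the associated 2×2 mass matrix with rows (δ_n, k_n(1/x)) and (k_n(x), δ_n) is invertible.) -/

import Mathlib

/-- `δ_n = (1/(4n))·∑_{l=1}^{n−1} 1/sin(πl/n) − 1`. -/
noncomputable def deltaN (n : ℕ) : ℝ :=
  (1 / (4 * (n : ℝ))) * ∑ l ∈ Finset.Icc 1 (n - 1), 1 / Real.sin (Real.pi * l / n) - 1

/-- `h_n(x,θ) = (1/n)·∑_{l=1}^{n} (1 − x·cos(2πl/n + θ))/(1 + x² − 2x·cos(2πl/n + θ))^{3/2}`. -/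
noncomputable def hN (n : ℕ) (x θ : ℝ) : ℝ :=
  (1 / (n : ℝ)) * ∑ l ∈ Finset.Icc 1 n,
    (1 - x * Real.cos (2 * Real.pi * l / n + θ)) /
      (1 + x ^ 2 - 2 * x * Real.cos (2 * Real.pi * l / n + θ)) ^ ((3 : ℝ) / 2)

/-- `k_n(x,θ) = h_n(x,θ) − 1`. -/
noncomputable def kN (n : ℕ) (x θ : ℝ) : ℝ := hN n x θ - 1

open Finset Complex

theorem rootSumIdent (n : ℕ) (hn : 2 ≤ n) (x : ℝ) (hx0 : 0 < x) (hx1 : x < 1) :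
    ∑ l ∈ Finset.Icc 1 n, (1 - (x:ℂ) * Complex.exp ((2 * Real.pi * l / n : ℝ) * I))⁻¹
      = n / (1 - (x:ℂ)^n) := by
  have hn0 : (n:ℝ) ≠ 0 := by positivity
  set q : ℂ := Complex.exp ((2 * Real.pi / n : ℝ) * I) with hqdef
  have hq : ∀ l : ℕ, Complex.exp ((2 * Real.pi * l / n : ℝ) * I) = q ^ l := by
    intro l
    rw [hqdef, ← Complex.exp_nat_mul]
    congr 1
    push_cast
    field_simp
  have habsq : ∀ l : ℕ, ‖q ^ l‖ = 1 := by
    intro l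
    rw [← hq l, Complex.norm_exp_ofReal_mul_I]
  have hqn : q ^ n = 1 := by
    rw [← hq n]
    have : (2 * Real.pi * n / n : ℝ) = 2 * Real.pi := by field_simp
    rw [this]
    simpa using Complex.exp_two_pi_mul_I
  have hxn1 : (1 : ℂ) - (x:ℂ)^n ≠ 0 := by
    have : (x:ℝ)^n < 1 := pow_lt_one₀ hx0.le hx1 (by omega)
    intro h
    have : ((x:ℝ)^n : ℂ) = 1 := by push_cast; linear_combination -h
    have := Complex.ofReal_injective (by exact_mod_cast this : ((x^n : ℝ):ℂ) = ((1:ℝ):ℂ))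
    linarith
  have hne : ∀ l : ℕ, 1 - (x:ℂ) * q ^ l ≠ 0 := by
    intro l h
    have h1 : ‖(x:ℂ) * q ^ l‖ = x := by
      rw [norm_mul, habsq l, Complex.norm_real, Real.norm_eq_abs, abs_of_pos hx0, mul_one]
    have h2 : (x:ℂ) * q ^ l = 1 := by linear_combination -h
    rw [h2, norm_one] at h1
    linarith
  have hexp : ∀ l : ℕ, (1 - (x:ℂ) * q ^ l)⁻¹
      = (1 - (x:ℂ)^n)⁻¹ * ∑ m ∈ Finset.range n, (x:ℂ)^m * (q^m)^l := by
    intro l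
    have hgeom := geom_sum_mul ((x:ℂ) * q ^ l) n
    have hy : ((x:ℂ) * q ^ l) ^ n = (x:ℂ)^n := by
      rw [mul_pow, ← pow_mul, mul_comm l n, pow_mul, hqn, one_pow, mul_one]
    rw [hy] at hgeom
    have hSS : ∑ m ∈ Finset.range n, (x:ℂ)^m * (q^m)^l
        = ∑ m ∈ Finset.range n, ((x:ℂ) * q ^ l)^m := by
      apply Finset.sum_congr rfl
      intro m _
      rw [mul_pow, ← pow_mul, ← pow_mul, mul_comm m l]
    have key : (1 - (x:ℂ) * q ^ l) * ∑ m ∈ Finset.range n, (x:ℂ)^m * (q^m)^l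
        = 1 - (x:ℂ)^n := by
      rw [hSS]
      linear_combination -hgeom
    have hS : ∑ m ∈ Finset.range n, (x:ℂ)^m * (q^m)^l
        = (1 - (x:ℂ)^n) * (1 - (x:ℂ) * q ^ l)⁻¹ := by
      field_simp [hne l]
      linear_combination key
    rw [hS, ← mul_assoc, inv_mul_cancel₀ hxn1, one_mul]
  calc ∑ l ∈ Finset.Icc 1 n, (1 - (x:ℂ) * Complex.exp ((2 * Real.pi * l / n : ℝ) * I))⁻¹
      = ∑ l ∈ Finset.Icc 1 n, (1 - (x:ℂ)^n)⁻¹ * ∑ m ∈ Finset.range n, (x:ℂ)^m * (q^m)^l := by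
        apply Finset.sum_congr rfl; intro l _; rw [hq l, hexp l]
    _ = (1 - (x:ℂ)^n)⁻¹ * ∑ m ∈ Finset.range n, (x:ℂ)^m * ∑ l ∈ Finset.Icc 1 n, (q^m)^l := by
        rw [← Finset.mul_sum, Finset.sum_comm]
        congr 1
        apply Finset.sum_congr rfl
        intro m _
        rw [Finset.mul_sum]
    _ = n / (1 - (x:ℂ)^n) := by
        have hinner : ∀ m ∈ Finset.range n, (x:ℂ)^m * ∑ l ∈ Finset.Icc 1 n, (q^m)^l
            = if m = 0 then (n:ℂ) else 0 := by
          intro m hm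
          rw [Finset.mem_range] at hm
          by_cases hm0 : m = 0
          · simp [hm0]
          · rw [if_neg hm0]
            have hr1 : q ^ m ≠ 1 := by
              intro h
              rw [← hq m, Complex.exp_eq_one_iff] at h
              obtain ⟨k, hk⟩ := h
              rw [show (k:ℂ) * (2*(Real.pi:ℂ)*I) = ((k:ℂ)*(2*(Real.pi:ℂ)))*I by ring] at hk
              have hI : ((2*Real.pi*m/n : ℝ):ℂ) = (k:ℂ)*(2*(Real.pi:ℂ)) :=
                mul_right_cancel₀ Complex.I_ne_zero hk
              have hre : (2*Real.pi*m/n : ℝ) = (k:ℝ)*(2*Real.pi) := by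
                exact_mod_cast hI
              have hpi := Real.pi_pos
              have h2pi : (2*Real.pi) ≠ 0 := by positivity
              have hmn : (m:ℝ)/n = (k:ℝ) := by
                apply mul_left_cancel₀ h2pi
                rw [show 2*Real.pi*((m:ℝ)/n) = 2*Real.pi*m/n by ring, hre]; ring
              have h0 : (0:ℝ) < (m:ℝ)/n := by
                apply div_pos _ (by positivity)
                exact_mod_cast Nat.pos_of_ne_zero hm0
              have h1 : (m:ℝ)/n < 1 := by
                rw [div_lt_one (by positivity)]
                exact_mod_cast hm
              rw [hmn] at h0 h1
              have hk0 : (0:ℤ) < k := by exact_mod_cast h0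
              have hk1 : (1:ℤ) ≤ k := hk0
              have : (1:ℝ) ≤ (k:ℝ) := by exact_mod_cast hk1
              linarith
            have hrn : (q ^ m) ^ n = 1 := by
              rw [← pow_mul, mul_comm m n, pow_mul, hqn, one_pow]
            have hzero : ∑ l ∈ Finset.Icc 1 n, (q^m)^l = 0 := by
              rw [← Finset.Ico_add_one_right_eq_Icc, Finset.sum_Ico_eq_sum_range]
              have : ∑ l ∈ Finset.range (n + 1 - 1), (q^m)^(1+l)
                  = (q^m) * ∑ l ∈ Finset.range n, (q^m)^l := by
                simp only [Nat.add_sub_cancel, pow_add, pow_one]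
                rw [Finset.mul_sum]
              rw [this, geom_sum_eq hr1, hrn]
              simp
            rw [hzero, mul_zero]
        rw [Finset.sum_congr rfl hinner]
        rw [Finset.sum_ite_eq' (Finset.range n) 0 (fun _ => (n:ℂ))]
        rw [if_pos (Finset.mem_range.mpr (by omega : 0 < n))]
        ring


theorem sumA (n : ℕ) (hn : 2 ≤ n) (x : ℝ) (hx0 : 0 < x) (hx1 : x < 1) :
    ∑ l ∈ Finset.Icc 1 n, (1 - x * Real.cos (2 * Real.pi * l / n)) /
      (1 + x ^ 2 - 2 * x * Real.cos (2 * Real.pi * l / n)) = n / (1 - x ^ n) := by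
  have h := congrArg Complex.re (rootSumIdent n hn x hx0 hx1)
  rw [Complex.re_sum] at h
  have hterm : ∀ l : ℕ, (1 - (x:ℂ) * Complex.exp ((2 * Real.pi * l / n : ℝ) * I))⁻¹.re
      = (1 - x * Real.cos (2 * Real.pi * l / n)) /
        (1 + x ^ 2 - 2 * x * Real.cos (2 * Real.pi * l / n)) := by
    intro l
    set θ : ℝ := 2 * Real.pi * l / n with hθ
    rw [Complex.inv_re]
    have hre : (1 - (x:ℂ) * Complex.exp ((θ:ℝ) * I)).re = 1 - x * Real.cos θ := by
      simp [Complex.sub_re, Complex.mul_re, Complex.exp_ofReal_mul_I_re,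
        Complex.exp_ofReal_mul_I_im]
    have him : (1 - (x:ℂ) * Complex.exp ((θ:ℝ) * I)).im = -(x * Real.sin θ) := by
      simp [Complex.sub_im, Complex.mul_im, Complex.exp_ofReal_mul_I_re,
        Complex.exp_ofReal_mul_I_im]
    rw [Complex.normSq_apply, hre, him]
    congr 1
    have h1 := Real.sin_sq_add_cos_sq θ
    nlinarith [h1]
  rw [Finset.sum_congr rfl (fun l _ => hterm l)] at h
  rw [h]
  rw [show ((n:ℂ)/(1-(x:ℂ)^n)) = (((n:ℝ)/(1-x^n) : ℝ) : ℂ) by push_cast; ring]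
  exact Complex.ofReal_re _


theorem rpow32 {z : ℝ} (hz : 0 < z) : z ^ ((3:ℝ)/2) = z * Real.sqrt z := by
  rw [show (3:ℝ)/2 = 1 + 1/2 by norm_num, Real.rpow_add hz, Real.rpow_one,
    ← Real.sqrt_eq_rpow]

theorem Dpos (x : ℝ) (hx0 : 0 < x) (hx1 : x < 1) (θ : ℝ) :
    0 < 1 + x ^ 2 - 2 * x * Real.cos θ := by
  nlinarith [Real.cos_le_one θ]



theorem sumB (n : ℕ) (hn : 2 ≤ n) (x : ℝ) (hx0 : 0 < x) (hx1 : x < 1) :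
    0 ≤ ∑ l ∈ Finset.Icc 1 n, (Real.cos (2 * Real.pi * l / n) - x) /
      (1 + x ^ 2 - 2 * x * Real.cos (2 * Real.pi * l / n)) := by
  have hxn : x ^ n < 1 := pow_lt_one₀ hx0.le hx1 (by omega)
  have hxn0 : (0:ℝ) < 1 - x ^ n := by linarith
  have key : ∑ l ∈ Finset.Icc 1 n, (Real.cos (2 * Real.pi * l / n) - x) /
      (1 + x ^ 2 - 2 * x * Real.cos (2 * Real.pi * l / n))
      = (1/x) * ((n : ℝ) / (1 - x ^ n) - n) := by
    have expand : ∀ l : ℕ, (Real.cos (2 * Real.pi * l / n) - x) /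
        (1 + x ^ 2 - 2 * x * Real.cos (2 * Real.pi * l / n))
        = (1/x) * ((1 - x * Real.cos (2 * Real.pi * l / n)) /
            (1 + x ^ 2 - 2 * x * Real.cos (2 * Real.pi * l / n)) - 1) := by
      intro l
      have hD := (Dpos x hx0 hx1 (2 * Real.pi * l / n)).ne'
      set c : ℝ := Real.cos (2 * Real.pi * l / n) with hc
      rw [div_sub_one hD, show 1 - x * c - (1 + x ^ 2 - 2 * x * c) = x * (c - x) by ring,
        mul_div_assoc, ← mul_assoc, one_div_mul_cancel hx0.ne', one_mul]
    rw [Finset.sum_congr rfl (fun l _ => expand l), ← Finset.mul_sum, Finset.sum_sub_distrib,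
      sumA n hn x hx0 hx1, Finset.sum_const, Nat.card_Icc]
    simp
  rw [key]
  have : (n:ℝ) ≤ (n:ℝ) / (1 - x^n) := by
    rw [le_div_iff₀ hxn0]
    nlinarith [pow_pos hx0 n, (by positivity : (0:ℝ) < (n:ℝ))]
  exact mul_nonneg (by positivity) (by linarith)


theorem part1 (n : ℕ) (hn : 2 ≤ n) (x : ℝ) (hx0 : 0 < x) (hx1 : x < 1) :
    1 < hN n x 0 := by
  have hn0 : (0:ℝ) < n := by positivity
  have hxn : x ^ n < 1 := pow_lt_one₀ hx0.le hx1 (by omega)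
  have hxnpos : (0:ℝ) < x ^ n := pow_pos hx0 n
  have hu : (0:ℝ) < 1 - x ^ n := by linarith
  -- termwise bound
  have hterm : ∀ l : ℕ,
      ((1 - x * Real.cos (2 * Real.pi * l / n)) /
        (1 + x ^ 2 - 2 * x * Real.cos (2 * Real.pi * l / n))) ^ 2
      ≤ (1 - x * Real.cos (2 * Real.pi * l / n)) /
        (1 + x ^ 2 - 2 * x * Real.cos (2 * Real.pi * l / n)) ^ ((3:ℝ)/2) := by
    intro l
    set c : ℝ := Real.cos (2 * Real.pi * l / n) with hc
    set D : ℝ := 1 + x ^ 2 - 2 * x * c with hD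
    have hDpos : 0 < D := Dpos x hx0 hx1 _
    have hA : 0 < 1 - x * c := by nlinarith [Real.cos_le_one (2 * Real.pi * l / n)]
    have hc2 : c ^ 2 ≤ 1 := by
      nlinarith [Real.neg_one_le_cos (2 * Real.pi * l / n),
        Real.cos_le_one (2 * Real.pi * l / n)]
    have hAD : (1 - x * c) ^ 2 ≤ D := by
      nlinarith [mul_le_mul_of_nonneg_left hc2 (sq_nonneg x)]
    rw [rpow32 hDpos]
    have hs := Real.sqrt_pos.mpr hDpos
    have hss := Real.sq_sqrt hDpos.le
    have hAs : 1 - x * c ≤ Real.sqrt D := (Real.le_sqrt hA.le hDpos.le).mpr hAD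
    rw [div_pow, div_le_div_iff₀ (by positivity) (by positivity)]
    have key1 : (1 - x*c)^2 * Real.sqrt D ≤ (1 - x*c) * D := by
      nlinarith [mul_le_mul_of_nonneg_left hAs (mul_nonneg hA.le hs.le), hss]
    nlinarith [mul_le_mul_of_nonneg_left key1 hDpos.le]
  -- Cauchy–Schwarz
  have hCS := sq_sum_le_card_mul_sum_sq (s := Finset.Icc 1 n)
    (f := fun l => (1 - x * Real.cos (2 * Real.pi * l / n)) /
      (1 + x ^ 2 - 2 * x * Real.cos (2 * Real.pi * l / n)))
  rw [sumA n hn x hx0 hx1, Nat.card_Icc] at hCS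
  have hsum : ∑ l ∈ Finset.Icc 1 n,
      ((1 - x * Real.cos (2 * Real.pi * l / n)) /
        (1 + x ^ 2 - 2 * x * Real.cos (2 * Real.pi * l / n))) ^ 2
      ≤ ∑ l ∈ Finset.Icc 1 n, (1 - x * Real.cos (2 * Real.pi * l / n)) /
        (1 + x ^ 2 - 2 * x * Real.cos (2 * Real.pi * l / n)) ^ ((3:ℝ)/2) :=
    Finset.sum_le_sum fun l _ => hterm l
  have hcard : ((n + 1 - 1 : ℕ) : ℝ) = (n : ℝ) := by
    norm_num
  rw [hcard] at hCS
  -- combine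
  unfold hN
  simp only [add_zero]
  set T := ∑ l ∈ Finset.Icc 1 n, (1 - x * Real.cos (2 * Real.pi * l / n)) /
      (1 + x ^ 2 - 2 * x * Real.cos (2 * Real.pi * l / n)) ^ ((3:ℝ)/2) with hT
  have h1 : ((n:ℝ) / (1 - x ^ n)) ^ 2 ≤ (n:ℝ) * T := by
    calc ((n:ℝ) / (1 - x ^ n)) ^ 2 ≤ (n:ℝ) * ∑ l ∈ Finset.Icc 1 n,
        ((1 - x * Real.cos (2 * Real.pi * l / n)) /
          (1 + x ^ 2 - 2 * x * Real.cos (2 * Real.pi * l / n))) ^ 2 := hCS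
      _ ≤ (n:ℝ) * T := by exact mul_le_mul_of_nonneg_left hsum hn0.le
  have hu1 : (1 - x ^ n) ^ 2 < 1 := by nlinarith
  rw [div_pow, div_le_iff₀ (by positivity)] at h1
  rw [show (1:ℝ)/n * T = T / n by ring, lt_div_iff₀ hn0]
  have hT0 : 0 < T := by
    by_contra hT
    push_neg at hT
    have h2 : (n:ℝ)*T ≤ 0 := mul_nonpos_of_nonneg_of_nonpos hn0.le hT
    have h3 : (n:ℝ)*T*(1-x^n)^2 ≤ 0 := mul_nonpos_of_nonpos_of_nonneg h2 (sq_nonneg _)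
    nlinarith [mul_pos hn0 hn0]
  by_contra h
  push_neg at h
  have c1 : (n:ℝ)*T ≤ n*n := by nlinarith
  have c2 : (n:ℝ)*T*(1-x^n)^2 ≤ (n:ℝ)*n*(1-x^n)^2 := mul_le_mul_of_nonneg_right c1 (sq_nonneg _)
  have c3 : (n:ℝ)*n*(1-x^n)^2 < (n:ℝ)*n := by nlinarith [mul_pos hn0 hn0]
  nlinarith [h1]


theorem part2 (n : ℕ) (hn : 2 ≤ n) (x : ℝ) (hx0 : 0 < x) (hx1 : x < 1) :
    hN n x⁻¹ 0 ≤ 0 := by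
  have hn0 : (0:ℝ) < n := by positivity
  have hx2 : (0:ℝ) < 1 - x^2 := by nlinarith
  have hs0 : 0 < Real.sqrt (1 - x^2) := Real.sqrt_pos.mpr hx2
  -- rewrite each term
  have hterm : ∀ l : ℕ,
      (1 - x⁻¹ * Real.cos (2 * Real.pi * l / n)) /
        (1 + x⁻¹ ^ 2 - 2 * x⁻¹ * Real.cos (2 * Real.pi * l / n)) ^ ((3:ℝ)/2)
      = (x^2 * (x - Real.cos (2 * Real.pi * l / n))) /
        ((1 + x ^ 2 - 2 * x * Real.cos (2 * Real.pi * l / n)) *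
          Real.sqrt (1 + x ^ 2 - 2 * x * Real.cos (2 * Real.pi * l / n))) := by
    intro l
    set c : ℝ := Real.cos (2 * Real.pi * l / n) with hc
    set D : ℝ := 1 + x ^ 2 - 2 * x * c with hD
    have hDpos : 0 < D := Dpos x hx0 hx1 _
    have hbase : 1 + x⁻¹ ^ 2 - 2 * x⁻¹ * c = D / x^2 := by
      field_simp [hD]
      ring
    have hx3 : (x^2 : ℝ) ^ ((3:ℝ)/2) = x^3 := by
      rw [← Real.rpow_natCast x 2, ← Real.rpow_mul hx0.le]
      norm_num
    rw [hbase, Real.div_rpow hDpos.le (by positivity), hx3, rpow32 hDpos]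
    have hsD : Real.sqrt D ≠ 0 := (Real.sqrt_pos.mpr hDpos).ne'
    field_simp
  unfold hN
  simp only [add_zero]
  rw [Finset.sum_congr rfl (fun l _ => hterm l)]
  have hbound : ∀ l : ℕ,
      (x^2 * (x - Real.cos (2 * Real.pi * l / n))) /
        ((1 + x ^ 2 - 2 * x * Real.cos (2 * Real.pi * l / n)) *
          Real.sqrt (1 + x ^ 2 - 2 * x * Real.cos (2 * Real.pi * l / n)))
      ≤ (x^2 / Real.sqrt (1 - x^2)) * ((x - Real.cos (2 * Real.pi * l / n)) /
          (1 + x ^ 2 - 2 * x * Real.cos (2 * Real.pi * l / n))) := by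
    intro l
    set c : ℝ := Real.cos (2 * Real.pi * l / n) with hc
    set D : ℝ := 1 + x ^ 2 - 2 * x * c with hD
    have hDpos : 0 < D := Dpos x hx0 hx1 _
    have hsD : 0 < Real.sqrt D := Real.sqrt_pos.mpr hDpos
    have claim : (x - c) * Real.sqrt (1 - x^2) ≤ (x - c) * Real.sqrt D := by
      rcases le_total c x with h | h
      · have hD1 : 1 - x^2 ≤ D := by nlinarith
        have h2 := Real.sqrt_le_sqrt hD1
        nlinarith [mul_le_mul_of_nonneg_left h2 (by linarith : (0:ℝ) ≤ x - c)]
      · have hD1 : D ≤ 1 - x^2 := by nlinarith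
        have h2 := Real.sqrt_le_sqrt hD1
        nlinarith [mul_le_mul_of_nonpos_left h2 (by linarith : x - c ≤ 0)]
    have hrhs : (x^2 / Real.sqrt (1 - x^2)) * ((x - c) / D)
        = (x^2 * (x - c)) / (D * Real.sqrt (1 - x^2)) := by
      rw [div_mul_div_comm, mul_comm (Real.sqrt (1 - x^2)) D]
    rw [hrhs, div_le_div_iff₀ (by positivity) (by positivity)]
    nlinarith [mul_le_mul_of_nonneg_left claim (by positivity : (0:ℝ) ≤ x^2 * D)]
  have hSle : ∑ l ∈ Finset.Icc 1 n, (x^2 * (x - Real.cos (2 * Real.pi * l / n))) /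
        ((1 + x ^ 2 - 2 * x * Real.cos (2 * Real.pi * l / n)) *
          Real.sqrt (1 + x ^ 2 - 2 * x * Real.cos (2 * Real.pi * l / n)))
      ≤ (x^2 / Real.sqrt (1 - x^2)) * ∑ l ∈ Finset.Icc 1 n,
          ((x - Real.cos (2 * Real.pi * l / n)) /
            (1 + x ^ 2 - 2 * x * Real.cos (2 * Real.pi * l / n))) := by
    rw [Finset.mul_sum]
    exact Finset.sum_le_sum fun l _ => hbound l
  have hflip : ∑ l ∈ Finset.Icc 1 n, ((x - Real.cos (2 * Real.pi * l / n)) /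
        (1 + x ^ 2 - 2 * x * Real.cos (2 * Real.pi * l / n)))
      = - ∑ l ∈ Finset.Icc 1 n, ((Real.cos (2 * Real.pi * l / n) - x) /
        (1 + x ^ 2 - 2 * x * Real.cos (2 * Real.pi * l / n))) := by
    rw [← Finset.sum_neg_distrib]
    apply Finset.sum_congr rfl
    intro l _
    rw [← neg_div, neg_sub]
  have hB := sumB n hn x hx0 hx1
  have hS0 : ∑ l ∈ Finset.Icc 1 n, (x^2 * (x - Real.cos (2 * Real.pi * l / n))) /
        ((1 + x ^ 2 - 2 * x * Real.cos (2 * Real.pi * l / n)) *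
          Real.sqrt (1 + x ^ 2 - 2 * x * Real.cos (2 * Real.pi * l / n))) ≤ 0 := by
    apply hSle.trans
    rw [hflip]
    have hx2s : (0:ℝ) ≤ x^2 / Real.sqrt (1 - x^2) := by positivity
    nlinarith [mul_le_mul_of_nonneg_left hB hx2s]
  have h1n : (0:ℝ) ≤ 1 / (n:ℝ) := by positivity
  exact mul_nonpos_of_nonneg_of_nonpos h1n hS0

/-- `δ_n² − k_n(x)·k_n(1/x) > 0` for `0 < x < 1`: two homothetic regular `n`-gons around a
central mass never give a really perverse relative equilibrium (the mass matrix is invertible). -/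
theorem twoHomothetic_not_reallyPerverse (n : ℕ) (hn : 2 ≤ n) (x : ℝ)
    (hx0 : 0 < x) (hx1 : x < 1) :
    0 < deltaN n ^ 2 - kN n x 0 * kN n x⁻¹ 0 ∧
    (!![deltaN n, kN n x⁻¹ 0; kN n x 0, deltaN n] : Matrix (Fin 2) (Fin 2) ℝ).det ≠ 0 := by
  have hp1 : 1 < hN n x 0 := part1 n hn x hx0 hx1
  have hp2 : hN n x⁻¹ 0 ≤ 0 := part2 n hn x hx0 hx1
  have hk1 : 0 < kN n x 0 := by unfold kN; linarith
  have hk2 : kN n x⁻¹ 0 < 0 := by unfold kN; linarith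
  have hprod : kN n x 0 * kN n x⁻¹ 0 < 0 := mul_neg_of_pos_of_neg hk1 hk2
  have hmain : 0 < deltaN n ^ 2 - kN n x 0 * kN n x⁻¹ 0 := by
    nlinarith [sq_nonneg (deltaN n)]
  refine ⟨hmain, ?_⟩
  have hdet : (!![deltaN n, kN n x⁻¹ 0; kN n x 0, deltaN n] :
      Matrix (Fin 2) (Fin 2) ℝ).det = deltaN n ^ 2 - kN n x 0 * kN n x⁻¹ 0 := by
    rw [Matrix.det_fin_two_of]; ring
  rw [hdet]
  exact ne_of_gt hmain
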